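/- Let L and T be even positive integers and let W be a complex ((L+T)/2 + 1) × (L/2 + 1) matrix, with rows of W indexed by 0 ≤ i ≤ (L+T)/2 and columns by 0 ≤ j ≤ L/2. Define the complex (L+T) × L matrix T(W) entrywise as follows (rows 0 ≤ i ≤ L+T−1, columns 0 ≤ j ≤ L−1): for i ∈ {0, (L+T)/2}: T(W)_{i,0} = Re(W_{i,0}), T(W)_{i,L/2} = Re(W_{i,L/2}), T(W)_{i,j} = W_{i,j}/2 for 0 < j < L/2, and T(W)_{i,j} = conj(W_{i,L−j})/2 for j > L/2; for 0 < i < (L+T)/2: T(W)_{i,j} = W_{i,j} for j ≤ L/2 and T(W)_{i,j} = 0 for j > L/2; for i > (L+T)/2: T(W)_{i,0} = conj(W_{L+T−i,0}), T(W)_{i,j} = conj(W_{L+T−i,L−j}) for j ≥ L/2, and T(W)_{i,j} = 0 for 0 < j < L/2. Then for every x ∈ ℝ^L, setting Y = D_L·x, one has Π_{L+T}^{-1}(W·(Π_L·Y)) = T(W)·Y. -/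

import Mathlib

/-- The (unnormalised) discrete Fourier transform matrix `D_N`,
with entries `(D_N)_{jk} = exp(−2πi·jk/N)`. -/
noncomputable def Dmat (N : ℕ) : Matrix (Fin N) (Fin N) ℂ :=
  Matrix.of fun j k =>
    Complex.exp (-(2 * (Real.pi : ℂ) * Complex.I * (j : ℕ) * (k : ℕ)) / N)

/-- The inverse DFT matrix `D_N⁻¹ = (1/N)·D_N^*`. -/
noncomputable def DmatInv (N : ℕ) : Matrix (Fin N) (Fin N) ℂ :=
  ((N : ℂ)⁻¹) • (Dmat N).conjTranspose

/-- The projection `Π_N : ℂ^N → ℂ^{N/2+1}` for even `N = 2·(m+1)`,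
`Π_N(Y_0,…,Y_{N−1}) = (Y_0,…,Y_{N/2})`. -/
def PiProj (m : ℕ) (Y : Fin (2 * (m + 1)) → ℂ) : Fin (m + 2) → ℂ :=
  fun j => Y ⟨j.val, by have := j.isLt; omega⟩

/-- The map `Π_N⁻¹ : ℂ^{N/2+1} → ℂ^N` for even `N = 2·(m+1)`,
`Π_N⁻¹(Y_0,…,Y_{N/2}) = (Re Y_0, Y_1, …, Y_{N/2−1}, Re Y_{N/2}, conj Y_{N/2−1}, …, conj Y_1)`. -/
noncomputable def PiInv (m : ℕ) (Y : Fin (m + 2) → ℂ) : Fin (2 * (m + 1)) → ℂ :=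
  fun i =>
    if h1 : i.val = 0 then ((Y ⟨0, by omega⟩).re : ℂ)
    else if h2 : i.val < m + 1 then Y ⟨i.val, by omega⟩
    else if h3 : i.val = m + 1 then ((Y ⟨m + 1, by omega⟩).re : ℂ)
    else (starRingEnd ℂ) (Y ⟨2 * (m + 1) - i.val, by have := i.isLt; omega⟩)

/-- The real discrete Fourier transform `RFT_N = Π_N ∘ D_N` for even `N = 2·(m+1)`. -/
noncomputable def RFT (m : ℕ) (x : Fin (2 * (m + 1)) → ℂ) : Fin (m + 2) → ℂ :=
  PiProj m ((Dmat (2 * (m + 1))).mulVec x)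

/-- The inverse real discrete Fourier transform `iRFT_N = D_N⁻¹ ∘ Π_N⁻¹`
for even `N = 2·(m+1)`. -/
noncomputable def iRFT (m : ℕ) (c : Fin (m + 2) → ℂ) : Fin (2 * (m + 1)) → ℂ :=
  (DmatInv (2 * (m + 1))).mulVec (PiInv m c)

/-- The matrix `T(W)` of Lemma `matrix_charac` (STATEMENT 7), defined entrywise from the
complex `((L+T)/2+1) × (L/2+1)` matrix `W`, where `L = 2·(a+1)`, `T = 2·(b+1)`,
so `(L+T)/2 = a+b+2` and `L/2 = a+1`. -/
noncomputable def TW (a b : ℕ) (W : Matrix (Fin (a + b + 3)) (Fin (a + 2)) ℂ) :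
    Matrix (Fin (2 * (a + b + 2))) (Fin (2 * (a + 1))) ℂ :=
  Matrix.of fun i j =>
    if hi : i.val = 0 ∨ i.val = a + b + 2 then
      if hj0 : j.val = 0 then ((W ⟨i.val, by omega⟩ ⟨0, by omega⟩).re : ℂ)
      else if hjh : j.val = a + 1 then ((W ⟨i.val, by omega⟩ ⟨a + 1, by omega⟩).re : ℂ)
      else if hjlt : j.val < a + 1 then W ⟨i.val, by omega⟩ ⟨j.val, by omega⟩ / 2
      else (starRingEnd ℂ)
        (W ⟨i.val, by omega⟩ ⟨2 * (a + 1) - j.val, by have := j.isLt; omega⟩) / 2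
    else if hi2 : i.val < a + b + 2 then
      if hj : j.val ≤ a + 1 then W ⟨i.val, by omega⟩ ⟨j.val, by omega⟩ else 0
    else
      if hj0 : j.val = 0 then
        (starRingEnd ℂ) (W ⟨2 * (a + b + 2) - i.val, by have := i.isLt; omega⟩ ⟨0, by omega⟩)
      else if hj : a + 1 ≤ j.val then
        (starRingEnd ℂ) (W ⟨2 * (a + b + 2) - i.val, by have := i.isLt; omega⟩
          ⟨2 * (a + 1) - j.val, by have := j.isLt; omega⟩)
      else 0

section aux
open Complex Finset
set_option maxHeartbeats 1000000

lemma sum_half {a : ℕ} (g : Fin (2 * (a + 1)) → ℂ)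
    (hg : ∀ k : Fin (2 * (a + 1)), a + 1 < k.val → g k = 0) :
    ∑ k, g k = ∑ j : Fin (a + 2), g ⟨j.val, by omega⟩ := by
  have := Finset.sum_map (Finset.univ : Finset (Fin (a+2)))
      ⟨fun j : Fin (a+2) => (⟨j.val, by omega⟩ : Fin (2*(a+1))),
       fun x y h => Fin.ext (by simpa using congrArg Fin.val h)⟩ g
  rw [show (∑ j : Fin (a + 2), g ⟨j.val, by omega⟩) =
      ∑ j : Fin (a+2), g ((⟨fun j : Fin (a+2) => (⟨j.val, by omega⟩ : Fin (2*(a+1))),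
       fun x y h => Fin.ext (by simpa using congrArg Fin.val h)⟩ : Fin (a+2) ↪ Fin (2*(a+1))) j) from rfl,
    ← this]
  symm
  apply Finset.sum_subset (Finset.subset_univ _)
  intro k _ hk
  apply hg
  by_contra h
  push_neg at h
  apply hk
  simp only [Finset.mem_map, Finset.mem_univ, true_and, Function.Embedding.coeFn_mk]
  exact ⟨⟨k.val, by omega⟩, Fin.ext rfl⟩

def sig (a : ℕ) : Fin (2*(a+1)) → Fin (2*(a+1)) :=
  fun k => ⟨if k.val = 0 then 0 else 2*(a+1) - k.val, by have := k.isLt; split <;> omega⟩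

lemma sig_inv (a : ℕ) : Function.Involutive (sig a) := by
  intro k
  apply Fin.ext
  simp only [sig]
  have := k.isLt
  split_ifs <;> omega

lemma creal (z : ℂ) : ((z.re : ℝ) : ℂ) = z / 2 + (starRingEnd ℂ) z / 2 := by
  rw [← add_div, Complex.add_conj]
  push_cast
  ring


lemma Dmat_entry_conj (L : ℕ) (hL : 0 < L) (j j' k : Fin L) (h : L ∣ (j.val + j'.val)) :
    (starRingEnd ℂ) (Dmat L j k) = Dmat L j' k := by
  obtain ⟨n, hn⟩ := h
  simp only [Dmat, Matrix.of_apply, ← Complex.exp_conj, map_div₀, map_neg, map_mul,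
    Complex.conj_ofReal, Complex.conj_I, map_ofNat, map_natCast]
  have hL0 : ((L:ℕ):ℂ) ≠ 0 := Nat.cast_ne_zero.mpr (by omega)
  have h1 : ((j:ℕ):ℂ) + ((j':ℕ):ℂ) = (L:ℂ) * (n:ℂ) := by
    exact_mod_cast congrArg (Nat.cast : ℕ → ℂ) hn
  have harg : -(2 * (Real.pi:ℂ) * (-Complex.I) * (j:ℕ) * (k:ℕ)) / (L:ℕ) =
      -(2 * (Real.pi:ℂ) * Complex.I * (j':ℕ) * (k:ℕ)) / (L:ℕ) +
      ((n * k.val : ℕ) : ℤ) * (2 * Real.pi * Complex.I) := by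
    push_cast
    field_simp
    linear_combination ((k:ℕ):ℂ) * h1
  rw [harg, Complex.exp_add, Complex.exp_int_mul_two_pi_mul_I, mul_one]

lemma Y_conj (L : ℕ) (hL : 0 < L) (x : Fin L → ℝ) (j j' : Fin L) (h : L ∣ (j.val + j'.val)) :
    (starRingEnd ℂ) ((Dmat L).mulVec (fun k => (x k : ℂ)) j) =
      (Dmat L).mulVec (fun k => (x k : ℂ)) j' := by
  simp only [Matrix.mulVec, dotProduct, map_sum, map_mul, Complex.conj_ofReal]
  exact Finset.sum_congr rfl fun k _ => by rw [Dmat_entry_conj L hL j j' k h]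

noncomputable def gfun (a : ℕ) (w : Fin (a+2) → ℂ) (Y : Fin (2*(a+1)) → ℂ) :
    Fin (2*(a+1)) → ℂ :=
  fun k => if h : k.val ≤ a+1 then w ⟨k.val, by omega⟩ * Y k / 2 else 0

lemma gfun_sum (a : ℕ) (w : Fin (a+2) → ℂ) (Y : Fin (2*(a+1)) → ℂ) :
    ∑ k, gfun a w Y k = (∑ j : Fin (a+2), w j * Y ⟨j.val, by omega⟩) / 2 := by
  rw [sum_half (gfun a w Y) (fun k hk => by rw [gfun, dif_neg (by omega)]), Finset.sum_div]
  apply Finset.sum_congr rfl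
  intro j _
  rw [gfun, dif_pos (show j.val ≤ a+1 by omega)]

noncomputable def hfun (a : ℕ) (w : Fin (a+2) → ℂ) (Y : Fin (2*(a+1)) → ℂ) :
    Fin (2*(a+1)) → ℂ :=
  fun k => if h : k.val ≤ a+1 then (starRingEnd ℂ) (w ⟨k.val, by omega⟩ * Y k) else 0

lemma hfun_sum (a : ℕ) (w : Fin (a+2) → ℂ) (Y : Fin (2*(a+1)) → ℂ) :
    ∑ k, hfun a w Y k = (starRingEnd ℂ) (∑ j : Fin (a+2), w j * Y ⟨j.val, by omega⟩) := by
  rw [sum_half (hfun a w Y) (fun k hk => by rw [hfun, dif_neg (by omega)]), map_sum]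
  apply Finset.sum_congr rfl
  intro j _
  rw [hfun, dif_pos (show j.val ≤ a+1 by omega)]

lemma midrow (a : ℕ) (w : Fin (a+2) → ℂ) (Y : Fin (2*(a+1)) → ℂ)
    (e : Fin (2*(a+1)) → ℂ)
    (he : ∀ kv (hkv : kv < 2*(a+1)),
      e ⟨kv, hkv⟩ = if h : kv ≤ a+1 then w ⟨kv, by omega⟩ else 0) :
    ∑ k, e k * Y k = ∑ j : Fin (a+2), w j * Y ⟨j.val, by omega⟩ := by
  rw [sum_half (fun k => e k * Y k) (fun k hk => by
    have := he k.val k.isLt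
    rw [Fin.eta] at this
    show e k * Y k = 0
    rw [this, dif_neg (by omega), zero_mul])]
  apply Finset.sum_congr rfl
  intro j _
  rw [he j.val (by omega), dif_pos (by omega)]

lemma boundary (a : ℕ) (w : Fin (a+2) → ℂ) (Y : Fin (2*(a+1)) → ℂ)
    (hs0 : (starRingEnd ℂ) (Y ⟨0, by omega⟩) = Y ⟨0, by omega⟩)
    (hsh : (starRingEnd ℂ) (Y ⟨a+1, by omega⟩) = Y ⟨a+1, by omega⟩)
    (hsk : ∀ kv (h1 : 0 < kv) (h2 : kv < 2*(a+1)),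
      (starRingEnd ℂ) (Y ⟨kv, h2⟩) = Y ⟨2*(a+1) - kv, by omega⟩)
    (e : Fin (2*(a+1)) → ℂ)
    (he : ∀ kv (hkv : kv < 2*(a+1)),
      e ⟨kv, hkv⟩ = if kv = 0 then ((w ⟨0, by omega⟩).re : ℂ)
        else if kv = a+1 then ((w ⟨a+1, by omega⟩).re : ℂ)
        else if h : kv < a+1 then w ⟨kv, by omega⟩ / 2
        else (starRingEnd ℂ) (w ⟨2*(a+1) - kv, by omega⟩) / 2) :
    ∑ k, e k * Y k = (((∑ j : Fin (a+2), w j * Y ⟨j.val, by omega⟩).re : ℝ) : ℂ) := by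
  have hstep : ∀ k : Fin (2*(a+1)),
      e k * Y k = gfun a w Y k + (starRingEnd ℂ) (gfun a w Y (sig a k)) := by
    rintro ⟨kv, hkv⟩
    rw [he kv hkv]
    by_cases h0 : kv = 0
    · subst h0
      rw [if_pos rfl,
        show sig a ⟨0, hkv⟩ = ⟨0, hkv⟩ by apply Fin.ext; simp [sig],
        gfun, dif_pos (show (0:ℕ) ≤ a+1 by omega),
        creal (w ⟨0, by omega⟩), map_div₀, map_mul, hs0, map_ofNat]
      ring
    · have hsig : sig a ⟨kv, hkv⟩ = ⟨2*(a+1) - kv, by omega⟩ := by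
        apply Fin.ext; simp [sig, h0]
      rw [hsig]
      by_cases hh : kv = a+1
      · subst hh
        rw [if_neg h0, if_pos rfl,
          show (⟨2*(a+1) - (a+1), by omega⟩ : Fin (2*(a+1))) = ⟨a+1, hkv⟩ by
            apply Fin.ext; simp; omega,
          gfun, dif_pos (show a+1 ≤ a+1 from le_refl _),
          creal (w ⟨a+1, by omega⟩), map_div₀, map_mul, hsh, map_ofNat]
        ring
      · by_cases hlt : kv < a+1
        · rw [if_neg h0, if_neg hh, dif_pos hlt,
            gfun, gfun, dif_pos (show kv ≤ a+1 by omega),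
            dif_neg (show ¬ (2*(a+1) - kv ≤ a+1) by omega), map_zero, add_zero]
          ring
        · rw [if_neg h0, if_neg hh, dif_neg hlt,
            gfun, gfun, dif_neg (show ¬ (kv ≤ a+1) by omega),
            dif_pos (show 2*(a+1) - kv ≤ a+1 by omega)]
          rw [map_div₀, map_mul]
          rw [hsk (2*(a+1) - kv) (by omega) (by omega)]
          rw [show (⟨2*(a+1) - (2*(a+1) - kv), by omega⟩ : Fin (2*(a+1))) = ⟨kv, hkv⟩ by
              apply Fin.ext; simp; omega]
          rw [map_ofNat]
          ring
  have hcomp := Equiv.sum_comp (Function.Involutive.toPerm (sig a) (sig_inv a)) (gfun a w Y)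
  simp only [Function.Involutive.coe_toPerm] at hcomp
  calc ∑ k, e k * Y k
      = ∑ k, (gfun a w Y k + (starRingEnd ℂ) (gfun a w Y (sig a k))) :=
        Finset.sum_congr rfl fun k _ => hstep k
    _ = (∑ k, gfun a w Y k) + (starRingEnd ℂ) (∑ k, gfun a w Y (sig a k)) := by
        rw [Finset.sum_add_distrib, map_sum]
    _ = (∑ k, gfun a w Y k) + (starRingEnd ℂ) (∑ k, gfun a w Y k) := by rw [hcomp]
    _ = _ := by
        rw [gfun_sum, creal (∑ j : Fin (a+2), w j * Y ⟨j.val, by omega⟩), map_div₀, map_ofNat]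

lemma tailrow (a : ℕ) (w : Fin (a+2) → ℂ) (Y : Fin (2*(a+1)) → ℂ)
    (hs0 : (starRingEnd ℂ) (Y ⟨0, by omega⟩) = Y ⟨0, by omega⟩)
    (hsk : ∀ kv (h1 : 0 < kv) (h2 : kv < 2*(a+1)),
      (starRingEnd ℂ) (Y ⟨kv, h2⟩) = Y ⟨2*(a+1) - kv, by omega⟩)
    (e : Fin (2*(a+1)) → ℂ)
    (he : ∀ kv (hkv : kv < 2*(a+1)),
      e ⟨kv, hkv⟩ = if kv = 0 then (starRingEnd ℂ) (w ⟨0, by omega⟩)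
        else if h : a+1 ≤ kv then (starRingEnd ℂ) (w ⟨2*(a+1) - kv, by omega⟩)
        else 0) :
    ∑ k, e k * Y k = (starRingEnd ℂ) (∑ j : Fin (a+2), w j * Y ⟨j.val, by omega⟩) := by
  have hcomp := Equiv.sum_comp (Function.Involutive.toPerm (sig a) (sig_inv a))
    (fun k => e k * Y k)
  simp only [Function.Involutive.coe_toPerm] at hcomp
  rw [← hfun_sum a w Y, ← hcomp]
  apply Finset.sum_congr rfl
  rintro ⟨kv, hkv⟩ _
  by_cases h0 : kv = 0
  · subst h0
    rw [show sig a ⟨0, hkv⟩ = ⟨0, hkv⟩ by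
        apply Fin.ext; simp [sig],
      he 0 hkv, if_pos rfl, hfun, dif_pos (show (0:ℕ) ≤ a+1 by omega), map_mul, hs0]
  · have hsig : sig a ⟨kv, hkv⟩ = ⟨2*(a+1) - kv, by omega⟩ := by
      apply Fin.ext; simp [sig, h0]
    rw [hsig]
    by_cases hle : kv ≤ a+1
    · rw [he (2*(a+1) - kv) (by omega), if_neg (by omega), dif_pos (by omega),
        show (⟨2*(a+1) - (2*(a+1) - kv), by omega⟩ : Fin (a+2)) = ⟨kv, by omega⟩ by
          apply Fin.ext; simp; omega,
        hfun, dif_pos (show kv ≤ a+1 from hle), map_mul, hsk kv (by omega) hkv]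
    · rw [he (2*(a+1) - kv) (by omega), if_neg (by omega), dif_neg (by omega),
        hfun, dif_neg (show ¬ (kv ≤ a+1) from hle), zero_mul]

end aux

/-- for every real `x ∈ ℝ^L`, setting `Y = D_L·x`, one has
`Π_{L+T}⁻¹(W·(Π_L·Y)) = T(W)·Y`. -/
theorem fits_matrix_characterisation (a b : ℕ)
    (W : Matrix (Fin (a + b + 3)) (Fin (a + 2)) ℂ) (x : Fin (2 * (a + 1)) → ℝ)
    (Y : Fin (2 * (a + 1)) → ℂ) (hY : Y = (Dmat (2 * (a + 1))).mulVec fun k => (x k : ℂ)) :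
    PiInv (a + b + 1) (W.mulVec (PiProj a Y)) = (TW a b W).mulVec Y := by
  have hs0 : (starRingEnd ℂ) (Y ⟨0, by omega⟩) = Y ⟨0, by omega⟩ := by
    rw [hY]; exact Y_conj _ (by omega) x _ _ (by simp)
  have hsh : (starRingEnd ℂ) (Y ⟨a+1, by omega⟩) = Y ⟨a+1, by omega⟩ := by
    rw [hY]; exact Y_conj _ (by omega) x _ _ (show 2*(a+1) ∣ (a+1) + (a+1) from ⟨1, by omega⟩)
  have hsk : ∀ kv (h1 : 0 < kv) (h2 : kv < 2*(a+1)),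
      (starRingEnd ℂ) (Y ⟨kv, h2⟩) = Y ⟨2*(a+1) - kv, by omega⟩ := by
    intro kv h1 h2
    rw [hY]
    exact Y_conj _ (by omega) x _ _ (show 2*(a+1) ∣ kv + (2*(a+1) - kv) from ⟨1, by omega⟩)
  funext i
  have hR : (TW a b W).mulVec Y i = ∑ k, TW a b W i k * Y k := rfl
  have hmv : ∀ (i' : Fin (a+b+3)),
      W.mulVec (PiProj a Y) i' = ∑ j : Fin (a+2), W i' j * Y ⟨j.val, by omega⟩ := fun _ => rfl
  simp only [PiInv]
  split_ifs with h1 h2 h3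
  · -- i.val = 0
    rw [hR, boundary a (fun j => W ⟨i.val, by omega⟩ j) Y hs0 hsh hsk
        (fun k => TW a b W i k) ?_]
    · rw [hmv]
      rw [show ((⟨(i:ℕ), by omega⟩ : Fin (a+b+3))) = ⟨0, by omega⟩ from Fin.ext h1]
    · intro kv hkv
      show TW a b W i ⟨kv, hkv⟩ = _
      simp only [TW, Matrix.of_apply]
      rw [dif_pos (Or.inl h1)]
      split_ifs <;> first | rfl | omega
  · -- 0 < i.val < a+b+2
    rw [hR, midrow a (fun j => W ⟨i.val, by omega⟩ j) Y (fun k => TW a b W i k) ?_]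
    · rw [hmv]
    · intro kv hkv
      show TW a b W i ⟨kv, hkv⟩ = _
      simp only [TW, Matrix.of_apply]
      rw [dif_neg (by omega), dif_pos (show i.val < a+b+2 from h2)]
  · -- i.val = a+b+2
    rw [hR, boundary a (fun j => W ⟨i.val, by omega⟩ j) Y hs0 hsh hsk
        (fun k => TW a b W i k) ?_]
    · rw [hmv]
      rw [show ((⟨(i:ℕ), by omega⟩ : Fin (a+b+3))) = ⟨a+b+1+1, by omega⟩ from Fin.ext h3]
    · intro kv hkv
      show TW a b W i ⟨kv, hkv⟩ = _
      simp only [TW, Matrix.of_apply]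
      rw [dif_pos (Or.inr h3)]
      split_ifs <;> first | rfl | omega
  · -- i.val > a+b+2
    rw [hR, tailrow a (fun j => W ⟨2*(a+b+2) - i.val, by omega⟩ j) Y hs0 hsk
        (fun k => TW a b W i k) ?_]
    · rw [hmv]
    · intro kv hkv
      show TW a b W i ⟨kv, hkv⟩ = _
      simp only [TW, Matrix.of_apply]
      rw [dif_neg (by omega), dif_neg (by omega)]
      split_ifs <;> first | rfl | omega
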